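/- For h ∈ ℤ^m and c ∈ ℤ, let S(h,c) = {x ∈ ℝ^m : x_i ≥ -h_i for all i, and x_1 + … + x_m ≤ c} (a translated dilated standard simplex). If h_1 + … + h_m + c ≥ 0 and h'_1 + … + h'_m + c' ≥ 0, then S(h,c) + S(h',c') = S(h+h', c+c') and the pair (S(h,c), S(h',c')) has the integer decomposition property: (S(h,c) ∩ ℤ^m) + (S(h',c') ∩ ℤ^m) = S(h+h', c+c') ∩ ℤ^m. -/

import Mathlib

open Finset Pointwise

/-- The translated dilated standard simplex
`S(h,c) = {x ∈ ℝᵐ : xᵢ ≥ -hᵢ for all i, and x₁ + ⋯ + x_m ≤ c}`. -/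
def simplexS (m : ℕ) (h : Fin m → ℤ) (c : ℤ) : Set (Fin m → ℝ) :=
  {x | (∀ i, -(h i : ℝ) ≤ x i) ∧ ∑ i, x i ≤ (c : ℝ)}

/-- The set of integral points of `ℝ^κ`. -/
def intZ {κ : Type*} : Set (κ → ℝ) := {x | ∀ j, ∃ k : ℤ, x j = (k : ℝ)}

/-- Greedy splitting lemma: if `a ≤ b` pointwise and `∑ a ≤ t ≤ ∑ b`, there is
`y` with `a ≤ y ≤ b` pointwise and `∑ y = t`. -/
lemma exists_sum_eq_of_le {R : Type*} [CommRing R] [LinearOrder R] [IsStrictOrderedRing R] :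
    ∀ (m : ℕ) (a b : Fin m → R), (∀ i, a i ≤ b i) →
    ∀ t : R, ∑ i, a i ≤ t → t ≤ ∑ i, b i →
    ∃ y : Fin m → R, (∀ i, a i ≤ y i ∧ y i ≤ b i) ∧ ∑ i, y i = t := by
  intro m
  induction m with
  | zero =>
    intro a b _ t h1 h2
    simp only [Finset.univ_eq_empty, Finset.sum_empty] at h1 h2
    exact ⟨a, fun i => i.elim0, by simp [le_antisymm h2 h1]⟩
  | succ n ih =>
    intro a b hab t h1 h2
    rw [Fin.sum_univ_succ] at h1 h2
    set s : R := t - ∑ i : Fin n, a i.succ with hs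
    set y0 : R := max (a 0) (min (b 0) s) with hy0
    have ha0 : a 0 ≤ y0 := le_max_left _ _
    have hb0 : y0 ≤ b 0 := max_le (hab 0) (min_le_left _ _)
    have htail1 : ∑ i : Fin n, a i.succ ≤ t - y0 := by
      have : y0 ≤ s := max_le (by rw [hs]; linarith) (min_le_right _ _)
      rw [hs] at this; linarith
    have htail2 : t - y0 ≤ ∑ i : Fin n, b i.succ := by
      have hsum_tail : ∑ i : Fin n, a i.succ ≤ ∑ i : Fin n, b i.succ :=
        Finset.sum_le_sum fun i _ => hab i.succ
      rcases le_total (b 0) s with hc | hc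
      · have : y0 = b 0 := by rw [hy0, min_eq_left hc, max_eq_right (hab 0)]
        rw [this]; linarith
      · have : s ≤ y0 := le_trans (by rw [min_eq_right hc]) (le_max_right _ _)
        rw [hs] at this; linarith
    obtain ⟨z, hz1, hz2⟩ := ih (fun i => a i.succ) (fun i => b i.succ)
      (fun i => hab i.succ) (t - y0) htail1 htail2
    refine ⟨Fin.cons y0 z, ?_, ?_⟩
    · intro i
      refine Fin.cases ?_ ?_ i
      · simpa using ⟨ha0, hb0⟩
      · intro j; simpa using hz1 j
    · rw [Fin.sum_univ_succ]; simp only [Fin.cons_zero, Fin.cons_succ]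
      rw [hz2]; ring

/-- If `∑ᵢ hᵢ + c ≥ 0` and `∑ᵢ h'ᵢ + c' ≥ 0`, then
`S(h,c) + S(h',c') = S(h+h', c+c')` and the pair `(S(h,c), S(h',c'))` has the
integer decomposition property. -/
theorem simplex_sum_and_IDP (m : ℕ) (h h' : Fin m → ℤ) (c c' : ℤ)
    (hsum : 0 ≤ (∑ i, h i) + c) (hsum' : 0 ≤ (∑ i, h' i) + c') :
    simplexS m h c + simplexS m h' c' = simplexS m (fun i => h i + h' i) (c + c') ∧
    (simplexS m h c ∩ intZ) + (simplexS m h' c' ∩ intZ) =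
      simplexS m (fun i => h i + h' i) (c + c') ∩ intZ := by
  have hfwd : ∀ p ∈ simplexS m h c, ∀ q ∈ simplexS m h' c',
      p + q ∈ simplexS m (fun i => h i + h' i) (c + c') := by
    intro p hp q hq
    refine ⟨fun i => ?_, ?_⟩
    · have := hp.1 i; have := hq.1 i
      simp only [Pi.add_apply]; push_cast; linarith
    · have := hp.2; have := hq.2
      simp only [Pi.add_apply, Finset.sum_add_distrib]; push_cast; linarith
  constructor
  · apply Set.Subset.antisymm
    · rintro x ⟨p, hp, q, hq, rfl⟩
      exact hfwd p hp q hq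
    · rintro x ⟨hx1, hx2⟩
      have hab : ∀ i, -(h i : ℝ) ≤ x i + (h' i : ℝ) := by
        intro i; have := hx1 i; push_cast at this ⊢; linarith
      have hsx : ∑ i, x i ≤ (c : ℝ) + (c' : ℝ) := by push_cast at hx2; linarith
      set t : ℝ := max (-(∑ i, (h i : ℝ))) (∑ i, x i - (c' : ℝ)) with ht
      have hcastA : ((∑ i, h i : ℤ) : ℝ) = ∑ i, (h i : ℝ) := by push_cast; rfl
      have hcastB : ((∑ i, h' i : ℤ) : ℝ) = ∑ i, (h' i : ℝ) := by push_cast; rfl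
      have hsumR : (0:ℝ) ≤ ∑ i, (h i : ℝ) + (c : ℝ) := by
        have : ((0:ℤ):ℝ) ≤ (((∑ i, h i) + c : ℤ) : ℝ) := by exact_mod_cast hsum
        push_cast at this; linarith
      have hsumR' : (0:ℝ) ≤ ∑ i, (h' i : ℝ) + (c' : ℝ) := by
        have : ((0:ℤ):ℝ) ≤ (((∑ i, h' i) + c' : ℤ) : ℝ) := by exact_mod_cast hsum'
        push_cast at this; linarith
      obtain ⟨y, hy1, hy2⟩ := exists_sum_eq_of_le m (fun i => -(h i : ℝ))
        (fun i => x i + (h' i : ℝ)) hab t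
        (by rw [Finset.sum_neg_distrib]; exact le_max_left _ _)
        (by
          rw [Finset.sum_add_distrib]
          refine max_le ?_ ?_
          · have : ∀ i ∈ Finset.univ, -(h i:ℝ) ≤ x i + (h' i : ℝ) := fun i _ => hab i
            have := Finset.sum_le_sum this
            rw [Finset.sum_neg_distrib, Finset.sum_add_distrib] at this; linarith
          · linarith)
      refine ⟨y, ⟨fun i => (hy1 i).1, ?_⟩, x - y, ⟨fun i => ?_, ?_⟩, by funext i; simp only [Pi.add_apply, Pi.sub_apply]; ring⟩
      · rw [hy2, ht]
        refine max_le (by linarith) (by linarith)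
      · have := (hy1 i).2; simp only [Pi.sub_apply]; linarith
      · have : ∑ i, (x i - y i) = ∑ i, x i - ∑ i, y i := Finset.sum_sub_distrib _ _
        simp only [Pi.sub_apply]
        rw [this, hy2]
        have : ∑ i, x i - (c' : ℝ) ≤ t := le_max_right _ _
        linarith
  · apply Set.Subset.antisymm
    · rintro x ⟨p, hp, q, hq, rfl⟩
      refine ⟨hfwd p hp.1 q hq.1, fun j => ?_⟩
      obtain ⟨k, hk⟩ := hp.2 j; obtain ⟨l, hl⟩ := hq.2 j
      exact ⟨k + l, by simp [hk, hl]⟩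
    · rintro x ⟨⟨hx1, hx2⟩, hxZ⟩
      choose X hX using hxZ
      have hxfun : x = fun i => (X i : ℝ) := funext hX
      have hab : ∀ i, -(h i) ≤ X i + h' i := by
        intro i
        have := hx1 i
        rw [hX i] at this
        exact_mod_cast (by push_cast at this ⊢; linarith : (-(h i) : ℝ) ≤ ((X i + h' i : ℤ) : ℝ))
      have hsx : ∑ i, X i ≤ c + c' := by
        have : ((∑ i, X i : ℤ) : ℝ) ≤ ((c + c' : ℤ) : ℝ) := by
          push_cast
          calc ∑ i, (X i : ℝ) = ∑ i, x i := by
                exact Finset.sum_congr rfl fun i _ => (hX i).symm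
            _ ≤ ((c : ℝ) + c') := by push_cast at hx2; linarith
        exact_mod_cast this
      set t : ℤ := max (-(∑ i, h i)) (∑ i, X i - c') with ht
      obtain ⟨Y, hY1, hY2⟩ := exists_sum_eq_of_le m (fun i => -(h i))
        (fun i => X i + h' i) hab t
        (by rw [Finset.sum_neg_distrib]; exact le_max_left _ _)
        (by
          rw [Finset.sum_add_distrib]
          refine max_le ?_ ?_
          · have := Finset.sum_le_sum (fun i (_ : i ∈ Finset.univ) => hab i)
            rw [Finset.sum_neg_distrib, Finset.sum_add_distrib] at this; linarith
          · linarith)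
      refine ⟨(fun i => (Y i : ℝ)), ⟨⟨fun i => ?_, ?_⟩, fun i => ⟨Y i, rfl⟩⟩,
        (fun i => ((X i - Y i : ℤ) : ℝ)), ⟨⟨fun i => ?_, ?_⟩, fun i => ⟨X i - Y i, rfl⟩⟩, ?_⟩
      · show -((h i : ℤ) : ℝ) ≤ ((Y i : ℤ) : ℝ)
        exact_mod_cast (hY1 i).1
      · have htc : t ≤ c := max_le (by linarith) (by linarith)
        have : ∑ i, Y i ≤ c := hY2 ▸ htc
        calc ∑ i, (Y i : ℝ) = ((∑ i, Y i : ℤ) : ℝ) := by push_cast; rfl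
          _ ≤ (c : ℝ) := by exact_mod_cast this
      · have := (hY1 i).2
        have : -(h' i) ≤ X i - Y i := by linarith
        push_cast; exact_mod_cast (by exact_mod_cast this : ((-(h' i) : ℤ) : ℝ) ≤ ((X i - Y i : ℤ) : ℝ))
      · have : ∑ i, (X i - Y i) ≤ c' := by
          rw [Finset.sum_sub_distrib, hY2]
          have : ∑ i, X i - c' ≤ t := le_max_right _ _
          linarith
        calc ∑ i, ((X i - Y i : ℤ) : ℝ) = ((∑ i, (X i - Y i) : ℤ) : ℝ) := by push_cast; rfl
          _ ≤ (c' : ℝ) := by exact_mod_cast this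
      · funext i
        simp only [Pi.add_apply]
        rw [hX i]; push_cast; ring
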